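/- Let ξ_k, k ∈ ℕ, be independent mean-zero random variables and λ_k real numbers with S = ∑_{k=0}^∞ λ_k ξ_k converging a.s., such that E[exp{r λ_k ξ_k}] < ∞ for all k and ∑_{k=0}^∞ |E[exp{(r/2) λ_k ξ_k}] - 1| < ∞ for some r > 2. Then E[exp{(r/2) S}] = ∏_{k=0}^∞ E[exp{(r/2) λ_k ξ_k}] < ∞. -/

import Mathlib

open MeasureTheory ProbabilityTheory Filter

lemma aux_abs_prod_sub_one (s : Finset ℕ) (f : ℕ → ℝ) :
    |∏ k ∈ s, f k - 1| ≤ ∏ k ∈ s, (1 + |f k - 1|) - 1 := by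
  classical
  induction s using Finset.cons_induction with
  | empty => simp
  | cons a s ha ih =>
    rw [Finset.prod_cons, Finset.prod_cons]
    have h1 : (1:ℝ) ≤ ∏ k ∈ s, (1 + |f k - 1|) := by
      calc (1:ℝ) = ∏ _k ∈ s, (1:ℝ) := by simp
        _ ≤ ∏ k ∈ s, (1 + |f k - 1|) :=
          Finset.prod_le_prod (fun _ _ => zero_le_one) (fun k _ => by linarith [abs_nonneg (f k - 1)])
    have h2 : |f a * ∏ k ∈ s, f k - 1| ≤ |f a| * |∏ k ∈ s, f k - 1| + |f a - 1| := by
      calc |f a * ∏ k ∈ s, f k - 1| = |f a * (∏ k ∈ s, f k - 1) + (f a - 1)| := by ring_nf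
        _ ≤ |f a * (∏ k ∈ s, f k - 1)| + |f a - 1| := abs_add_le _ _
        _ = |f a| * |∏ k ∈ s, f k - 1| + |f a - 1| := by rw [abs_mul]
    have h3 : |f a| ≤ 1 + |f a - 1| := by
      calc |f a| = |1 + (f a - 1)| := by ring_nf
        _ ≤ |1| + |f a - 1| := abs_add_le _ _
        _ = 1 + |f a - 1| := by rw [abs_one]
    nlinarith [abs_nonneg (f a), abs_nonneg (f a - 1), abs_nonneg (∏ k ∈ s, f k - 1),
      mul_le_mul_of_nonneg_left ih (abs_nonneg (f a)),
      mul_le_mul_of_nonneg_right h3 (abs_nonneg (∏ k ∈ s, f k - 1))]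

lemma aux_abs_prod_sub_one_exp (s : Finset ℕ) (f : ℕ → ℝ) :
    |∏ k ∈ s, f k - 1| ≤ Real.exp (∑ k ∈ s, |f k - 1|) - 1 := by
  refine (aux_abs_prod_sub_one s f).trans ?_
  have h : ∏ k ∈ s, (1 + |f k - 1|) ≤ ∏ k ∈ s, Real.exp |f k - 1| :=
    Finset.prod_le_prod (fun k _ => by positivity)
      (fun k _ => by simpa [add_comm] using Real.add_one_le_exp (|f k - 1|))
  rw [← Real.exp_sum] at h
  linarith

lemma aux_abs_exp_sub_one (y : ℝ) :
    |Real.exp y - 1| ≤ (Real.exp y - 1) + 2 * min 1 |y| := by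
  rcases abs_cases (Real.exp y - 1) with ⟨h, _⟩ | ⟨h, _⟩
  · have : (0:ℝ) ≤ min 1 |y| := le_min zero_le_one (abs_nonneg y)
    linarith
  · have h1 : 1 - Real.exp y ≤ 1 := by nlinarith [Real.exp_pos y]
    have h2 : 1 - Real.exp y ≤ |y| := by
      have hy := Real.add_one_le_exp y
      have := neg_abs_le y
      linarith
    have := le_min h1 h2
    linarith

lemma aux_abs_log_le {x : ℝ} (hx : 0 < x) (h : |x - 1| ≤ 1/2) :
    |Real.log x| ≤ 2 * |x - 1| := by
  have hx2 : (1:ℝ)/2 ≤ x := by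
    rcases abs_cases (x - 1) with ⟨h1, _⟩ | ⟨h1, _⟩ <;> linarith
  have hub : Real.log x ≤ x - 1 := Real.log_le_sub_one_of_pos hx
  have hlb : 1 - x⁻¹ ≤ Real.log x := by
    have h2 := Real.log_le_sub_one_of_pos (inv_pos.mpr hx)
    rw [Real.log_inv] at h2
    linarith
  have key : x⁻¹ - 1 ≤ 2 * |x - 1| := by
    have hxx : x⁻¹ - 1 = (1 - x) / x := by field_simp
    rw [hxx, div_le_iff₀ hx]
    nlinarith [le_abs_self (x - 1), neg_abs_le (x - 1), abs_nonneg (x - 1)]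
  rw [abs_le]
  constructor
  · linarith
  · linarith [le_abs_self (x - 1), abs_nonneg (x - 1)]

set_option maxHeartbeats 1600000 in
/-- For independent mean-zero `ξ_k` and reals `λ_k` such that `S = ∑ λ_k ξ_k` converges a.s.,
with `E[exp{r λ_k ξ_k}] < ∞` and `∑ |E[exp{(r/2) λ_k ξ_k}] - 1| < ∞` for some `r > 2`,
one has `E[exp{(r/2) S}] = ∏_k E[exp{(r/2) λ_k ξ_k}] < ∞`. -/
theorem stmt12 {Ω : Type*} [MeasurableSpace Ω] (μ : Measure Ω) [IsProbabilityMeasure μ]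
    (ξ : ℕ → Ω → ℝ) (hm : ∀ k, Measurable (ξ k))
    (hindep : iIndepFun ξ μ)
    (hmean : ∀ k, ∫ ω, ξ k ω ∂μ = 0)
    (lam : ℕ → ℝ) (r : ℝ) (hr : 2 < r)
    (hintexp : ∀ k, Integrable (fun ω => Real.exp (r * lam k * ξ k ω)) μ)
    (hsum : Summable (fun k => |(∫ ω, Real.exp (r / 2 * lam k * ξ k ω) ∂μ) - 1|))
    (S : Ω → ℝ) (hSm : Measurable S)
    (hS : ∀ᵐ ω ∂μ,
      Tendsto (fun n => ∑ k ∈ Finset.range n, lam k * ξ k ω) atTop (nhds (S ω))) :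
    Integrable (fun ω => Real.exp (r / 2 * S ω)) μ ∧
    ∫ ω, Real.exp (r / 2 * S ω) ∂μ = ∏' k : ℕ, ∫ ω, Real.exp (r / 2 * lam k * ξ k ω) ∂μ := by
  classical
  have hrpos : (0:ℝ) < r := lt_trans two_pos hr
  set t : ℝ := r / 2 with ht_def
  have ht0 : 0 < t := by rw [ht_def]; positivity
  have htr : t ≤ r := by rw [ht_def]; linarith
  -- the summands
  set X : ℕ → Ω → ℝ := fun k ω => lam k * ξ k ω with hX_def
  have hXm : ∀ k, Measurable (X k) := fun k => (hm k).const_mul (lam k)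
  have hXindep : iIndepFun X μ :=
    hindep.comp (fun k x => lam k * x) (fun k => measurable_const_mul _)
  have hS' : ∀ᵐ ω ∂μ,
      Tendsto (fun n => ∑ k ∈ Finset.range n, X k ω) atTop (nhds (S ω)) := by
    simpa only [hX_def] using hS
  -- integrability of the individual exponentials
  have hXint : ∀ k, Integrable (fun ω => Real.exp (t * X k ω)) μ := by
    intro k
    refine Integrable.mono' ((integrable_const (1:ℝ)).add (hintexp k))
      ((((hXm k).const_mul t).exp).aestronglyMeasurable) ?_
    filter_upwards with ω
    simp only [Pi.add_apply]
    rw [Real.norm_eq_abs, abs_of_pos (Real.exp_pos _)]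
    simp only [hX_def, mul_assoc]
    rcases le_or_gt (lam k * ξ k ω) 0 with h | h
    · have h1 : t * (lam k * ξ k ω) ≤ 0 := mul_nonpos_of_nonneg_of_nonpos ht0.le h
      have h2 := Real.exp_le_one_iff.2 h1
      have h3 := Real.exp_pos (r * (lam k * ξ k ω))
      linarith
    · have h1 : t * (lam k * ξ k ω) ≤ r * (lam k * ξ k ω) :=
        mul_le_mul_of_nonneg_right htr h.le
      have h2 := Real.exp_le_exp.2 h1
      linarith
  -- integrability of exponential of finite sums
  have hSint : ∀ s : Finset ℕ,
      Integrable (fun ω => Real.exp (t * ∑ k ∈ s, X k ω)) μ := by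
    intro s
    have := hXindep.integrable_exp_mul_sum hXm (s := s) (fun i _ => hXint i)
    simpa [Finset.sum_apply] using this
  -- the factors a k
  set a : ℕ → ℝ := fun k => ∫ ω, Real.exp (t * X k ω) ∂μ with ha_def
  have ha_mgf : ∀ k, a k = mgf (X k) μ t := fun k => rfl
  have ha_pos : ∀ k, 0 < a k := by
    intro k
    rw [ha_mgf k]
    exact mgf_pos (hXint k)
  -- expectation of exponential of finite sums
  have hSmgf : ∀ s : Finset ℕ,
      ∫ ω, Real.exp (t * ∑ k ∈ s, X k ω) ∂μ = ∏ k ∈ s, a k := by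
    intro s
    have := hXindep.mgf_sum hXm s (t := t)
    simp only [mgf, Finset.sum_apply] at this
    simpa [ha_mgf, mgf] using this
  -- bridge with the statement's integrals
  have hgoal_a : ∀ k, (∫ ω, Real.exp (t * lam k * ξ k ω) ∂μ) = a k := by
    intro k
    simp only [ha_def, hX_def, mul_assoc]
  have hcsum : Summable (fun k => |a k - 1|) := by
    have h := hsum
    simp only [hgoal_a] at h
    exact h
  -- tails of the series ∑ |a k - 1|
  set τ : ℕ → ℝ := fun n => ∑' k, |a (k + n) - 1| with hτ_def
  have hτ0 : Tendsto τ atTop (nhds 0) := by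
    rw [hτ_def]
    exact tendsto_sum_nat_add fun k => |a k - 1|
  have hτ_nonneg : ∀ n, 0 ≤ τ n := fun n => tsum_nonneg fun k => abs_nonneg _
  have hIco_le : ∀ n m : ℕ, ∑ k ∈ Finset.Ico n m, |a k - 1| ≤ τ n := by
    intro n m
    rw [Finset.sum_Ico_eq_sum_range]
    have hs : Summable (fun k => |a (k + n) - 1|) := (summable_nat_add_iff n).2 hcsum
    have he : ∑ i ∈ Finset.range (m - n), |a (n + i) - 1|
        = ∑ i ∈ Finset.range (m - n), |a (i + n) - 1| := by
      refine Finset.sum_congr rfl fun i _ => ?_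
      rw [add_comm]
    rw [he]
    exact Summable.sum_le_tsum _ (fun i _ => abs_nonneg _) hs
  have hprodIco : ∀ n m : ℕ, ∏ k ∈ Finset.Ico n m, a k - 1 ≤ Real.exp (τ n) - 1 := by
    intro n m
    have h1 := aux_abs_prod_sub_one_exp (Finset.Ico n m) a
    have h2 := Real.exp_le_exp.2 (hIco_le n m)
    have h3 := le_abs_self (∏ k ∈ Finset.Ico n m, a k - 1)
    linarith
  -- bound on partial products
  set C : ℝ := Real.exp (∑' k, |a k - 1|) with hC_def
  have hC_pos : 0 < C := Real.exp_pos _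
  set P : ℕ → ℝ := fun n => ∏ k ∈ Finset.range n, a k with hP_def
  have hP_nonneg : ∀ n, 0 ≤ P n := fun n => Finset.prod_nonneg fun k _ => (ha_pos k).le
  have hP_le : ∀ n, P n ≤ C := by
    intro n
    have h1 := aux_abs_prod_sub_one_exp (Finset.range n) a
    have h2 : ∑ k ∈ Finset.range n, |a k - 1| ≤ ∑' k, |a k - 1| :=
      Summable.sum_le_tsum _ (fun i _ => abs_nonneg _) hcsum
    have h3 := Real.exp_le_exp.2 h2
    have h4 := le_abs_self (∏ k ∈ Finset.range n, a k - 1)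
    rw [hP_def, hC_def]
    simp only []
    linarith
  -- the partial exponentials
  set Y : ℕ → Ω → ℝ := fun n ω => Real.exp (t * ∑ k ∈ Finset.range n, X k ω) with hY_def
  have hYm : ∀ n, Measurable (Y n) := fun n =>
    ((Finset.measurable_sum _ (fun i _ => hXm i)).const_mul t).exp
  have hYint : ∀ n, Integrable (Y n) μ := fun n => hSint (Finset.range n)
  have hYeq : ∀ n, ∫ ω, Y n ω ∂μ = P n := fun n => hSmgf (Finset.range n)
  have hXSm : Measurable fun ω => Real.exp (t * S ω) := (hSm.const_mul t).exp
  -- independence of Y n and the tail factor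
  have hIndepYU : ∀ n m : ℕ,
      IndepFun (Y n) (fun ω => |Real.exp (t * ∑ k ∈ Finset.Ico n m, X k ω) - 1|) μ := by
    intro n m
    have hdisj : Disjoint (Finset.range n) (Finset.Ico n m) := by
      simp only [Finset.disjoint_left, Finset.mem_range, Finset.mem_Ico]
      intro k hk
      omega
    have h := hXindep.indepFun_finset (Finset.range n) (Finset.Ico n m) hdisj hXm
    have hφ : Measurable
        (fun v : { x // x ∈ Finset.range n } → ℝ => Real.exp (t * ∑ i, v i)) :=
      ((Finset.measurable_sum Finset.univ (fun i _ => measurable_pi_apply i)).const_mul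
        t).exp
    have hψ : Measurable
        (fun v : { x // x ∈ Finset.Ico n m } → ℝ =>
          |Real.exp (t * ∑ i, v i) - 1|) :=
      ((((Finset.measurable_sum Finset.univ (fun i _ => measurable_pi_apply i)).const_mul
        t).exp.sub measurable_const).abs)
    have h2 := h.comp hφ hψ
    convert h2 using 1
    · funext ω
      simp only [Function.comp_apply, hY_def]
      rw [Finset.sum_coe_sort (Finset.range n) (fun k => X k ω)]
    · funext ω
      simp only [Function.comp_apply]
      rw [Finset.sum_coe_sort (Finset.Ico n m) (fun k => X k ω)]
  -- key factorization
  have habs_int : ∀ s : Finset ℕ,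
      Integrable (fun ω => |Real.exp (t * ∑ k ∈ s, X k ω) - 1|) μ :=
    fun s => ((hSint s).sub (integrable_const 1)).abs
  have hkey : ∀ n m : ℕ, n ≤ m →
      ∫ ω, |Y m ω - Y n ω| ∂μ
        = P n * ∫ ω, |Real.exp (t * ∑ k ∈ Finset.Ico n m, X k ω) - 1| ∂μ := by
    intro n m hnm
    have hpt : ∀ ω, |Y m ω - Y n ω|
        = Y n ω * |Real.exp (t * ∑ k ∈ Finset.Ico n m, X k ω) - 1| := by
      intro ω
      have hsplit : (∑ k ∈ Finset.range m, X k ω)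
          = (∑ k ∈ Finset.range n, X k ω) + ∑ k ∈ Finset.Ico n m, X k ω :=
        (Finset.sum_range_add_sum_Ico (fun k => X k ω) hnm).symm
      simp only [hY_def]
      rw [hsplit, mul_add, Real.exp_add]
      rw [show Real.exp (t * ∑ k ∈ Finset.range n, X k ω) *
            Real.exp (t * ∑ k ∈ Finset.Ico n m, X k ω) -
            Real.exp (t * ∑ k ∈ Finset.range n, X k ω)
          = Real.exp (t * ∑ k ∈ Finset.range n, X k ω) *
            (Real.exp (t * ∑ k ∈ Finset.Ico n m, X k ω) - 1) by ring]
      rw [abs_mul, abs_of_pos (Real.exp_pos _)]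
    calc ∫ ω, |Y m ω - Y n ω| ∂μ
        = ∫ ω, Y n ω * |Real.exp (t * ∑ k ∈ Finset.Ico n m, X k ω) - 1| ∂μ := by
          exact integral_congr_ae (Eventually.of_forall hpt)
      _ = (∫ ω, Y n ω ∂μ) * ∫ ω, |Real.exp (t * ∑ k ∈ Finset.Ico n m, X k ω) - 1| ∂μ := by
          have := (hIndepYU n m).integral_fun_mul_eq_mul_integral (hYint n).aestronglyMeasurable
            (habs_int _).aestronglyMeasurable
          simpa [Pi.mul_apply] using this
      _ = P n * ∫ ω, |Real.exp (t * ∑ k ∈ Finset.Ico n m, X k ω) - 1| ∂μ := by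
          rw [hYeq]
  -- integral of min-truncations
  have hmin_int : ∀ g : Ω → ℝ, Measurable g →
      Integrable (fun ω => min 1 (t * |g ω|)) μ := by
    intro g hg
    refine Integrable.mono' (integrable_const (1:ℝ))
      ((measurable_const.min ((hg.abs).const_mul t)).aestronglyMeasurable) ?_
    filter_upwards with ω
    rw [Real.norm_eq_abs, abs_of_nonneg (le_min zero_le_one (by positivity))]
    exact min_le_left _ _
  set K : ℕ → ℕ → ℝ :=
    fun n m => ∫ ω, min 1 (t * |∑ k ∈ Finset.Ico n m, X k ω|) ∂μ with hK_def
  set J : ℕ → ℝ :=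
    fun n => ∫ ω, min 1 (t * |S ω - ∑ k ∈ Finset.range n, X k ω|) ∂μ with hJ_def
  have hK_nonneg : ∀ n m, 0 ≤ K n m := by
    intro n m
    simp only [hK_def]
    exact integral_nonneg fun ω => le_min zero_le_one (by positivity)
  have hJ_nonneg : ∀ n, 0 ≤ J n := by
    intro n
    simp only [hJ_def]
    exact integral_nonneg fun ω => le_min zero_le_one (by positivity)
  have hcont : Continuous fun x : ℝ => min 1 (t * |x|) :=
    continuous_const.min (continuous_const.mul continuous_abs)
  -- bound on ∫ |exp(tU) - 1|
  have hbound2 : ∀ n m : ℕ,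
      ∫ ω, |Real.exp (t * ∑ k ∈ Finset.Ico n m, X k ω) - 1| ∂μ
        ≤ (∏ k ∈ Finset.Ico n m, a k - 1) + 2 * K n m := by
    intro n m
    have hU_m : Measurable fun ω => ∑ k ∈ Finset.Ico n m, X k ω :=
      Finset.measurable_sum _ (fun i _ => hXm i)
    have h1 : ∫ ω, |Real.exp (t * ∑ k ∈ Finset.Ico n m, X k ω) - 1| ∂μ
        ≤ ∫ ω, ((Real.exp (t * ∑ k ∈ Finset.Ico n m, X k ω) - 1)
            + 2 * min 1 (t * |∑ k ∈ Finset.Ico n m, X k ω|)) ∂μ := by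
      refine integral_mono (habs_int _)
        (((hSint _).sub (integrable_const 1)).add ((hmin_int _ hU_m).const_mul 2)) ?_
      intro ω
      have h := aux_abs_exp_sub_one (t * ∑ k ∈ Finset.Ico n m, X k ω)
      rwa [abs_mul, abs_of_pos ht0] at h
    have hf1 : Integrable (fun ω => Real.exp (t * ∑ k ∈ Finset.Ico n m, X k ω) - 1) μ :=
      (hSint _).sub (integrable_const 1)
    have hf2 : Integrable (fun ω => 2 * min 1 (t * |∑ k ∈ Finset.Ico n m, X k ω|)) μ :=
      (hmin_int _ hU_m).const_mul 2
    rw [integral_add hf1 hf2, integral_sub (hSint _) (integrable_const 1),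
      integral_const_mul] at h1
    simp only [integral_const, measure_univ, ENNReal.toReal_one, smul_eq_mul, probReal_univ, one_mul] at h1
    rw [hSmgf] at h1
    exact h1
  -- convergence of K n m as m → ∞
  have hK_tend : ∀ n, Tendsto (fun m => K n m) atTop (nhds (J n)) := by
    intro n
    refine tendsto_integral_of_dominated_convergence (fun _ => (1:ℝ))
      (fun m => ((measurable_const.min
        (((Finset.measurable_sum _ (fun i _ => hXm i)).abs).const_mul t))).aestronglyMeasurable)
      (integrable_const 1) (fun m => ?_) ?_
    · filter_upwards with ω
      rw [Real.norm_eq_abs, abs_of_nonneg (le_min zero_le_one (by positivity))]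
      exact min_le_left _ _
    · filter_upwards [hS'] with ω hω
      have h1 : Tendsto (fun m => ∑ k ∈ Finset.Ico n m, X k ω) atTop
          (nhds (S ω - ∑ k ∈ Finset.range n, X k ω)) := by
        have h2 : Tendsto (fun m => (∑ k ∈ Finset.range m, X k ω)
            - ∑ k ∈ Finset.range n, X k ω) atTop
            (nhds (S ω - ∑ k ∈ Finset.range n, X k ω)) := hω.sub_const _
        refine h2.congr' ?_
        filter_upwards [eventually_ge_atTop n] with m hm
        rw [← Finset.sum_range_add_sum_Ico (fun k => X k ω) hm]
        ring
      exact (hcont.tendsto _).comp h1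
  -- J n → 0
  have hJ0 : Tendsto J atTop (nhds 0) := by
    have h := tendsto_integral_of_dominated_convergence (μ := μ)
      (F := fun n ω => min 1 (t * |S ω - ∑ k ∈ Finset.range n, X k ω|))
      (f := fun _ => (0:ℝ)) (fun _ => (1:ℝ))
      (fun n => ((measurable_const.min
        (((hSm.sub (Finset.measurable_sum _ (fun i _ => hXm i))).abs).const_mul
          t))).aestronglyMeasurable)
      (integrable_const 1)
      (fun n => by
        filter_upwards with ω
        rw [Real.norm_eq_abs, abs_of_nonneg (le_min zero_le_one (by positivity))]
        exact min_le_left _ _)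
      (by
        filter_upwards [hS'] with ω hω
        have h1 : Tendsto (fun n => S ω - ∑ k ∈ Finset.range n, X k ω) atTop
            (nhds 0) := by
          have := tendsto_const_nhds (x := S ω) (f := atTop (α := ℕ))
          simpa using this.sub hω
        have h2 := (hcont.tendsto _).comp h1
        simpa [Function.comp_def] using h2)
    simpa using h
  -- Fatou step
  have hfatou : ∀ n, ∫⁻ ω, ‖Real.exp (t * S ω) - Y n ω‖₊ ∂μ
      ≤ ENNReal.ofReal (C * ((Real.exp (τ n) - 1) + 2 * J n)) := by
    intro n
    have hmeas : ∀ m, Measurable fun ω => ((‖Y m ω - Y n ω‖₊ : NNReal) : ENNReal) :=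
      fun m => ((hYm m).sub (hYm n)).nnnorm.coe_nnreal_ennreal
    have hae : ∀ᵐ ω ∂μ, ((‖Real.exp (t * S ω) - Y n ω‖₊ : NNReal) : ENNReal)
        = liminf (fun m => ((‖Y m ω - Y n ω‖₊ : NNReal) : ENNReal)) atTop := by
      filter_upwards [hS'] with ω hω
      have h1 : Tendsto (fun m => Y m ω) atTop (nhds (Real.exp (t * S ω))) := by
        have := hω.const_mul t
        exact (Real.continuous_exp.tendsto _).comp this
      have h2 : Tendsto (fun m => ((‖Y m ω - Y n ω‖₊ : NNReal) : ENNReal)) atTop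
          (nhds ((‖Real.exp (t * S ω) - Y n ω‖₊ : NNReal) : ENNReal)) :=
        ENNReal.tendsto_coe.2 ((h1.sub_const _).nnnorm)
      exact h2.liminf_eq.symm
    have hstep : ∀ m, n ≤ m → ∫⁻ ω, ‖Y m ω - Y n ω‖₊ ∂μ
        ≤ ENNReal.ofReal (P n * ((Real.exp (τ n) - 1) + 2 * K n m)) := by
      intro m hnm
      have hint : Integrable (fun ω => Y m ω - Y n ω) μ := (hYint m).sub (hYint n)
      simp only [← enorm_eq_nnnorm]
      rw [← ofReal_integral_norm_eq_lintegral_enorm hint]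
      apply ENNReal.ofReal_le_ofReal
      have h1 : ∫ ω, ‖Y m ω - Y n ω‖ ∂μ = ∫ ω, |Y m ω - Y n ω| ∂μ := by
        simp [Real.norm_eq_abs]
      rw [h1, hkey n m hnm]
      have h2 : ∫ ω, |Real.exp (t * ∑ k ∈ Finset.Ico n m, X k ω) - 1| ∂μ
          ≤ (Real.exp (τ n) - 1) + 2 * K n m := by
        have := hbound2 n m
        have := hprodIco n m
        linarith
      have h3 : (0:ℝ) ≤ ∫ ω, |Real.exp (t * ∑ k ∈ Finset.Ico n m, X k ω) - 1| ∂μ :=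
        integral_nonneg fun ω => abs_nonneg _
      nlinarith [hP_nonneg n]
    have hlim : Tendsto (fun m => ENNReal.ofReal (P n * ((Real.exp (τ n) - 1) + 2 * K n m)))
        atTop (nhds (ENNReal.ofReal (P n * ((Real.exp (τ n) - 1) + 2 * J n)))) := by
      apply (ENNReal.continuous_ofReal.tendsto _).comp
      have := ((hK_tend n).const_mul 2).const_add (Real.exp (τ n) - 1)
      exact this.const_mul (P n)
    calc ∫⁻ ω, ‖Real.exp (t * S ω) - Y n ω‖₊ ∂μ
        = ∫⁻ ω, liminf (fun m => ((‖Y m ω - Y n ω‖₊ : NNReal) : ENNReal)) atTop ∂μ :=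
          lintegral_congr_ae hae
      _ ≤ liminf (fun m => ∫⁻ ω, ‖Y m ω - Y n ω‖₊ ∂μ) atTop := lintegral_liminf_le hmeas
      _ ≤ liminf (fun m => ENNReal.ofReal (P n * ((Real.exp (τ n) - 1) + 2 * K n m))) atTop := by
          refine liminf_le_liminf ?_
          filter_upwards [eventually_ge_atTop n] with m hm
          exact hstep m hm
      _ = ENNReal.ofReal (P n * ((Real.exp (τ n) - 1) + 2 * J n)) := hlim.liminf_eq
      _ ≤ ENNReal.ofReal (C * ((Real.exp (τ n) - 1) + 2 * J n)) := by
          apply ENNReal.ofReal_le_ofReal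
          have hb : 0 ≤ (Real.exp (τ n) - 1) + 2 * J n := by
            have h2 : (1:ℝ) ≤ Real.exp (τ n) := by
              have := Real.exp_le_exp.2 (hτ_nonneg n)
              rwa [Real.exp_zero] at this
            have := hJ_nonneg n
            linarith
          exact mul_le_mul_of_nonneg_right (hP_le n) hb
  -- integrability of exp (t * S)
  have hβ_nonneg : ∀ n, 0 ≤ (Real.exp (τ n) - 1) + 2 * J n := by
    intro n
    have h2 : (1:ℝ) ≤ Real.exp (τ n) := by
      have := Real.exp_le_exp.2 (hτ_nonneg n)
      rwa [Real.exp_zero] at this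
    have := hJ_nonneg n
    linarith
  have hdiff_int : ∀ n, Integrable (fun ω => Real.exp (t * S ω) - Y n ω) μ := by
    intro n
    refine ⟨(hXSm.sub (hYm n)).aestronglyMeasurable, ?_⟩
    exact lt_of_le_of_lt (hfatou n) ENNReal.ofReal_lt_top
  have hXint_final : Integrable (fun ω => Real.exp (t * S ω)) μ := by
    have hY0 : Y 0 = fun _ => (1:ℝ) := by
      funext ω
      simp [hY_def]
    have h := (hdiff_int 0).add (hYint 0)
    refine h.congr (Eventually.of_forall fun ω => ?_)
    simp only [Pi.add_apply]
    ring
  -- quantitative L¹ bound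
  have hdiff_le : ∀ n, ∫ ω, |Real.exp (t * S ω) - Y n ω| ∂μ
      ≤ C * ((Real.exp (τ n) - 1) + 2 * J n) := by
    intro n
    have h := hfatou n
    simp only [← enorm_eq_nnnorm] at h
    rw [← ofReal_integral_norm_eq_lintegral_enorm (hdiff_int n)] at h
    have hnn : 0 ≤ C * ((Real.exp (τ n) - 1) + 2 * J n) :=
      mul_nonneg hC_pos.le (hβ_nonneg n)
    have h2 := (ENNReal.ofReal_le_ofReal_iff hnn).1 h
    simpa [Real.norm_eq_abs] using h2
  -- the bound tends to 0
  have hβ0 : Tendsto (fun n => C * ((Real.exp (τ n) - 1) + 2 * J n)) atTop (nhds 0) := by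
    have h1 : Tendsto (fun n => Real.exp (τ n) - 1) atTop (nhds 0) := by
      have h2 := (Real.continuous_exp.tendsto 0).comp hτ0
      have h3 := h2.sub_const 1
      simpa using h3
    have h2 := h1.add (hJ0.const_mul 2)
    have h3 := h2.const_mul C
    simpa using h3
  -- P n → ∫ exp (t * S)
  have hP_tend : Tendsto P atTop (nhds (∫ ω, Real.exp (t * S ω) ∂μ)) := by
    rw [← tendsto_sub_nhds_zero_iff]
    have habs : ∀ n, |P n - ∫ ω, Real.exp (t * S ω) ∂μ|
        ≤ C * ((Real.exp (τ n) - 1) + 2 * J n) := by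
      intro n
      have h0 : P n - ∫ ω, Real.exp (t * S ω) ∂μ
          = ∫ ω, (Y n ω - Real.exp (t * S ω)) ∂μ := by
        rw [integral_sub (hYint n) hXint_final, hYeq]
      rw [h0]
      calc |∫ ω, (Y n ω - Real.exp (t * S ω)) ∂μ|
          ≤ ∫ ω, ‖Y n ω - Real.exp (t * S ω)‖ ∂μ := by
            simpa [Real.norm_eq_abs] using
              norm_integral_le_integral_norm (μ := μ) (fun ω => Y n ω - Real.exp (t * S ω))
        _ = ∫ ω, |Real.exp (t * S ω) - Y n ω| ∂μ := by
            simp [Real.norm_eq_abs, abs_sub_comm]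
        _ ≤ C * ((Real.exp (τ n) - 1) + 2 * J n) := hdiff_le n
    have h := squeeze_zero (fun n => abs_nonneg _) habs hβ0
    have h2 : ∀ n, -( |P n - ∫ ω, Real.exp (t * S ω) ∂μ|)
        ≤ P n - ∫ ω, Real.exp (t * S ω) ∂μ := fun n => neg_abs_le _
    have h3 : ∀ n, P n - ∫ ω, Real.exp (t * S ω) ∂μ
        ≤ |P n - ∫ ω, Real.exp (t * S ω) ∂μ| := fun n => le_abs_self _
    exact tendsto_of_tendsto_of_tendsto_of_le_of_le (by simpa using h.neg) h
      (fun n => h2 n) (fun n => h3 n)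
  -- convergence of the infinite product
  have hloga : Summable fun k => Real.log (a k) := by
    have hc0 : Tendsto (fun k => |a k - 1|) atTop (nhds 0) := hcsum.tendsto_atTop_zero
    have hev : ∀ᶠ k in atTop, ‖Real.log (a k)‖ ≤ 2 * |a k - 1| := by
      filter_upwards [hc0.eventually (eventually_lt_nhds (by norm_num : (0:ℝ) < 1/2))]
        with k hk
      rw [Real.norm_eq_abs]
      exact aux_abs_log_le (ha_pos k) hk.le
    refine Summable.of_norm_bounded_eventually (g := fun k => 2 * |a k - 1|)
      (hcsum.mul_left 2) ?_
    rwa [Nat.cofinite_eq_atTop]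
  have hHasProd : HasProd a (∏' k, a k) :=
    (Real.multipliable_of_summable_log ha_pos hloga).hasProd
  have hProd_tend : Tendsto P atTop (nhds (∏' k, a k)) := hHasProd.tendsto_prod_nat
  have hfinal : ∫ ω, Real.exp (t * S ω) ∂μ = ∏' k, a k :=
    tendsto_nhds_unique hP_tend hProd_tend
  refine ⟨hXint_final, ?_⟩
  rw [hfinal]
  exact tprod_congr fun k => (hgoal_a k).symm
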